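/- (Cumulative error bound.) Let d, Q, T be positive integers with Q ≤ d, let γ ∈ (0,1), η > 0, G, σ, C_n ≥ 0. Let (Ω, ℱ, ℙ) be a probability space with filtration (ℱ_t)_{t≥1}, let f : ℝ^d → ℝ be differentiable, and for t = 1,…,T let x(t), e(t) be ℱ_t-measurable and g(t) (ℝ^d-valued), w(t) (ℝ^Q-valued) be ℱ_{t+1}-measurable square-integrable random vectors, and e(T+1) a square-integrable random vector, satisfying: E[g(t) | ℱ_t] = ∇f(x(t)) a.s.; E[‖g(t) − ∇f(x(t))‖₂²] ≤ G²; E[‖w(t)‖₂²] ≤ σ²; e(1) = 0; and almost surely ‖e(t+1)‖₂ ≤ √(γ/2)·‖η g(t) + e(t)‖₂ + η(C_n + √(Q/d))·‖w(t)‖₂ for 1 ≤ t ≤ T. Then (1/T)·∑_{t=1}^T E[‖e(t)‖₂²] ≤ (2η²/(1−γ))·[(γ(1+γ)/(1−γ))·G² + 2(C_n + √(Q/d))²·σ²] + (2η²γ(1+γ)/(1−γ)²)·(1/T)·∑_{t=1}^T E[‖∇f(x(t))‖₂²]. -/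

import Mathlib

open MeasureTheory

section AuxLemmas

variable {α E : Type*} [NormedAddCommGroup E] [InnerProductSpace ℝ E] [CompleteSpace E]
  {m m0 : MeasurableSpace α} {μ : Measure α}

lemma aux_sq_integrable {f : α → E} (hf : MemLp f 2 μ) :
    Integrable (fun ω => ‖f ω‖ ^ 2) μ := by
  have h := hf.integrable_norm_rpow two_ne_zero ENNReal.ofNat_ne_top
  simpa [ENNReal.toReal_ofNat, Real.rpow_natCast] using h

lemma aux_condExpL2_ae_eq (hm : m ≤ m0) [IsFiniteMeasure μ] {f : α → E} (hf : MemLp f 2 μ) :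
    ((condExpL2 E ℝ hm (hf.toLp f) : α →₂[μ] E) : α → E) =ᵐ[μ] μ[f|m] := by
  refine ae_eq_condExp_of_forall_setIntegral_eq hm (hf.integrable one_le_two)
    (fun s hs hμs => integrableOn_condExpL2_of_measure_ne_top hm hμs.ne _)
    (fun s hs hμs => ?_) (aestronglyMeasurable_condExpL2 hm _)
  rw [integral_condExpL2_eq hm (hf.toLp f) hs hμs.ne]
  exact setIntegral_congr_ae (hm s hs) (hf.coeFn_toLp.mono fun ω hω _ => hω)

lemma aux_memℒp_condexp (hm : m ≤ m0) [IsFiniteMeasure μ] {f : α → E} (hf : MemLp f 2 μ) :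
    MemLp (μ[f|m]) 2 μ :=
  MemLp.ae_eq (aux_condExpL2_ae_eq hm hf) (Lp.memLp _)

lemma aux_inner_zero (hm : m ≤ m0) [IsFiniteMeasure μ] {Y Z : α → E}
    (hY : MemLp Y 2 μ) (hZ : MemLp Z 2 μ)
    (hYm : AEStronglyMeasurable[m] Y μ) (hZc : μ[Z|m] =ᵐ[μ] 0) :
    ∫ ω, (inner ℝ (Y ω) (Z ω) : ℝ) ∂μ = 0 := by
  have h0 : ((condExpL2 E ℝ hm (hZ.toLp Z) : α →₂[μ] E) : α → E) =ᵐ[μ] 0 :=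
    (aux_condExpL2_ae_eq hm hZ).trans hZc
  have hYm' : AEStronglyMeasurable[m] (hY.toLp Y : α → E) μ :=
    hYm.congr hY.coeFn_toLp.symm
  have h1 : (inner ℝ ((condExpL2 E ℝ hm (hZ.toLp Z) : α →₂[μ] E)) (hY.toLp Y) : ℝ)
      = inner ℝ (hZ.toLp Z) (hY.toLp Y) :=
    inner_condExpL2_eq_inner_fun hm (hZ.toLp Z) (hY.toLp Y) hYm'
  rw [L2.inner_def, L2.inner_def] at h1
  have h2 : ∫ a, (inner ℝ ((condExpL2 E ℝ hm (hZ.toLp Z) : α →₂[μ] E) a) ((hY.toLp Y : α → E) a) : ℝ) ∂μ = 0 := by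
    have hz : (fun a => (inner ℝ ((condExpL2 E ℝ hm (hZ.toLp Z) : α →₂[μ] E) a) ((hY.toLp Y : α → E) a) : ℝ))
        =ᵐ[μ] fun _ => (0 : ℝ) := by
      filter_upwards [h0] with a ha
      simp only [ha, Pi.zero_apply, inner_zero_left]
    rw [integral_congr_ae hz, integral_zero]
  have h3 : ∫ a, (inner ℝ ((hZ.toLp Z : α → E) a) ((hY.toLp Y : α → E) a) : ℝ) ∂μ = 0 := by
    rw [← h1]; exact h2
  rw [← h3]
  refine integral_congr_ae ?_
  filter_upwards [hY.coeFn_toLp, hZ.coeFn_toLp] with a hy hz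
  rw [hy, hz, real_inner_comm]

lemma aux_inner_integrable {Y Z : α → E} (hY : MemLp Y 2 μ) (hZ : MemLp Z 2 μ) :
    Integrable (fun ω => (inner ℝ (Y ω) (Z ω) : ℝ)) μ := by
  have h := L2.integrable_inner (𝕜 := ℝ) (hY.toLp Y) (hZ.toLp Z)
  refine h.congr ?_
  filter_upwards [hY.coeFn_toLp, hZ.coeFn_toLp] with a hy hz
  rw [hy, hz]

lemma aux_expand {Y Z : α → E} (η : ℝ) (hY : MemLp Y 2 μ) (hZ : MemLp Z 2 μ)
    (hcross : ∫ ω, (inner ℝ (Y ω) (Z ω) : ℝ) ∂μ = 0) :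
    ∫ ω, ‖Y ω + η • Z ω‖ ^ 2 ∂μ
      = ∫ ω, ‖Y ω‖ ^ 2 ∂μ + η ^ 2 * ∫ ω, ‖Z ω‖ ^ 2 ∂μ := by
  have hIY := aux_sq_integrable hY
  have hIZ := aux_sq_integrable hZ
  have hIYZ := aux_inner_integrable hY hZ
  have hpt : (fun ω => ‖Y ω + η • Z ω‖ ^ 2)
      = fun ω => ‖Y ω‖ ^ 2 + ((2 * η) * (inner ℝ (Y ω) (Z ω) : ℝ) + η ^ 2 * ‖Z ω‖ ^ 2) := by
    funext ω
    rw [norm_add_sq_real, real_inner_smul_right, norm_smul]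
    simp only [Real.norm_eq_abs]
    rw [mul_pow, sq_abs]
    ring
  have hIa : Integrable (fun ω => (2 * η) * (inner ℝ (Y ω) (Z ω) : ℝ)) μ := hIYZ.const_mul (2*η)
  have hIb : Integrable (fun ω => η ^ 2 * ‖Z ω‖ ^ 2) μ := hIZ.const_mul (η^2)
  have hI2 : Integrable (fun ω => (2 * η) * (inner ℝ (Y ω) (Z ω) : ℝ) + η ^ 2 * ‖Z ω‖ ^ 2) μ := hIa.add hIb
  rw [hpt, integral_add hIY hI2, integral_add hIa hIb,
    integral_const_mul, integral_const_mul, hcross]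
  ring

lemma aux_young {c p q : ℝ} (hc : 0 < c) (hc1 : c < 1) (hp : 0 ≤ p) (hq : 0 ≤ q) :
    (p + q) ^ 2 ≤ (1 + c) / (2 * c) * p ^ 2 + (1 + c) / (1 - c) * q ^ 2 := by
  have h2c : (0:ℝ) < 2 * c := by linarith
  have h1c : (0:ℝ) < 1 - c := by linarith
  rw [div_mul_eq_mul_div, div_mul_eq_mul_div, div_add_div _ _ (ne_of_gt h2c) (ne_of_gt h1c),
    le_div_iff₀ (by positivity)]
  nlinarith [sq_nonneg ((1 - c) * p - 2 * c * q), sq_nonneg (p + q), sq_nonneg (p - q)]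

lemma aux_sq_bound {L a b γ η K : ℝ} (hγ : 0 ≤ γ) (hL : 0 ≤ L)
    (h : L ≤ Real.sqrt (γ/2) * a + η * K * b) :
    L^2 ≤ γ * a^2 + 2*η^2*K^2 * b^2 := by
  have h2 : L^2 ≤ (Real.sqrt (γ/2) * a + η * K * b)^2 := pow_le_pow_left₀ hL h 2
  have hs2 : Real.sqrt (γ/2)^2 * a^2 = γ/2 * a^2 := by
    rw [Real.sq_sqrt (div_nonneg hγ (by norm_num))]
  nlinarith [sq_nonneg (Real.sqrt (γ/2) * a - η * K * b), hs2, h2]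

lemma aux_key_arith {γ η K G σ C B Yv Zv Wv A Fv : ℝ}
    (hγ0 : 0 < γ) (hγ1 : γ < 1) (hη : 0 ≤ η) (hK : 0 ≤ K)
    (h1 : C ≤ γ * B + (2*η^2*K^2) * Wv)
    (hB : B = Yv + η^2 * Zv)
    (hY : Yv ≤ (1+γ)/(2*γ) * A + (1+γ)/(1-γ)*η^2 * Fv)
    (hZ : Zv ≤ G^2) (hW : Wv ≤ σ^2) :
    C ≤ (1+γ)/2 * A + γ*(1+γ)/(1-γ)*η^2 * Fv + (γ*η^2*G^2 + 2*η^2*K^2*σ^2) := by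
  have hγne : γ ≠ 0 := ne_of_gt hγ0
  have h1γne : (1:ℝ) - γ ≠ 0 := ne_of_gt (by linarith)
  have ha := mul_le_mul_of_nonneg_left hY hγ0.le
  have e3 : γ*((1+γ)/(2*γ) * A + (1+γ)/(1-γ)*η^2 * Fv)
      = (1+γ)/2 * A + γ*(1+γ)/(1-γ)*η^2 * Fv := by field_simp <;> ring
  rw [e3] at ha
  have hb := mul_le_mul_of_nonneg_left hZ (by positivity : (0:ℝ) ≤ γ*η^2)
  have hc := mul_le_mul_of_nonneg_left hW (by positivity : (0:ℝ) ≤ 2*η^2*K^2)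
  subst hB
  nlinarith [ha, hb, hc, h1]

end AuxLemmas

set_option maxHeartbeats 1000000 in
theorem stmt13 (d Q T : ℕ) (hd : 0 < d) (hQ : 0 < Q) (hT : 0 < T) (hQd : Q ≤ d)
    (γ η G σ Cn : ℝ) (hγ0 : 0 < γ) (hγ1 : γ < 1) (hη : 0 < η)
    (hG : 0 ≤ G) (hσ : 0 ≤ σ) (hCn : 0 ≤ Cn)
    {Ω : Type*} {m : MeasurableSpace Ω} (P : Measure Ω) [IsProbabilityMeasure P]
    (ℱ : Filtration ℕ m)
    (f : EuclideanSpace ℝ (Fin d) → ℝ) (hf : Differentiable ℝ f)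
    (x e g : ℕ → Ω → EuclideanSpace ℝ (Fin d)) (w : ℕ → Ω → EuclideanSpace ℝ (Fin Q))
    (hx : ∀ t, 1 ≤ t → t ≤ T → StronglyMeasurable[ℱ t] (x t))
    (he : ∀ t, 1 ≤ t → t ≤ T → StronglyMeasurable[ℱ t] (e t))
    (hg : ∀ t, 1 ≤ t → t ≤ T → StronglyMeasurable[ℱ (t + 1)] (g t))
    (hw : ∀ t, 1 ≤ t → t ≤ T → StronglyMeasurable[ℱ (t + 1)] (w t))
    (hxL2 : ∀ t, 1 ≤ t → t ≤ T → MemLp (x t) 2 P)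
    (heL2 : ∀ t, 1 ≤ t → t ≤ T + 1 → MemLp (e t) 2 P)
    (hgL2 : ∀ t, 1 ≤ t → t ≤ T → MemLp (g t) 2 P)
    (hwL2 : ∀ t, 1 ≤ t → t ≤ T → MemLp (w t) 2 P)
    (hcond : ∀ t, 1 ≤ t → t ≤ T → P[g t|ℱ t] =ᵐ[P] fun ω => gradient f (x t ω))
    (hvar : ∀ t, 1 ≤ t → t ≤ T → ∫ ω, ‖g t ω - gradient f (x t ω)‖ ^ 2 ∂P ≤ G ^ 2)
    (hnoise : ∀ t, 1 ≤ t → t ≤ T → ∫ ω, ‖w t ω‖ ^ 2 ∂P ≤ σ ^ 2)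
    (he1 : e 1 = 0)
    (hrec : ∀ t, 1 ≤ t → t ≤ T → ∀ᵐ ω ∂P,
        ‖e (t + 1) ω‖ ≤ Real.sqrt (γ / 2) * ‖η • g t ω + e t ω‖
          + η * (Cn + Real.sqrt ((Q : ℝ) / d)) * ‖w t ω‖) :
    (1 / (T : ℝ)) * ∑ t ∈ Finset.Icc 1 T, ∫ ω, ‖e t ω‖ ^ 2 ∂P ≤
      2 * η ^ 2 / (1 - γ) * (γ * (1 + γ) / (1 - γ) * G ^ 2
          + 2 * (Cn + Real.sqrt ((Q : ℝ) / d)) ^ 2 * σ ^ 2)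
      + 2 * η ^ 2 * γ * (1 + γ) / (1 - γ) ^ 2 *
          ((1 / (T : ℝ)) * ∑ t ∈ Finset.Icc 1 T, ∫ ω, ‖gradient f (x t ω)‖ ^ 2 ∂P) := by
  classical
  set K : ℝ := Cn + Real.sqrt ((Q : ℝ) / d) with hKdef
  have hK : 0 ≤ K := add_nonneg hCn (Real.sqrt_nonneg _)
  have h1γ : (0:ℝ) < 1 - γ := by linarith
  have hγne : γ ≠ 0 := ne_of_gt hγ0
  have h1γne : (1:ℝ) - γ ≠ 0 := ne_of_gt h1γ
  -- the key one-step estimate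
  have key : ∀ t, 1 ≤ t → t ≤ T →
      (∫ ω, ‖e (t+1) ω‖^2 ∂P) ≤ (1+γ)/2 * (∫ ω, ‖e t ω‖^2 ∂P)
        + γ*(1+γ)/(1-γ)*η^2 * (∫ ω, ‖gradient f (x t ω)‖^2 ∂P)
        + (γ*η^2*G^2 + 2*η^2*K^2*σ^2) := by
    intro t ht1 htT
    have hm' : ℱ t ≤ m := ℱ.le t
    have hgradmeas : Measurable (gradient f) := by
      letI : MeasurableSpace (EuclideanSpace ℝ (Fin d) →L[ℝ] ℝ) := borel _
      haveI : BorelSpace (EuclideanSpace ℝ (Fin d) →L[ℝ] ℝ) := ⟨rfl⟩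
      have h1 : Measurable (fderiv ℝ f) := measurable_fderiv ℝ f
      have h2 : Continuous fun L : EuclideanSpace ℝ (Fin d) →L[ℝ] ℝ =>
          (InnerProductSpace.toDual ℝ (EuclideanSpace ℝ (Fin d))).symm L :=
        (InnerProductSpace.toDual ℝ (EuclideanSpace ℝ (Fin d))).symm.continuous
      exact h2.measurable.comp h1
    have hxsm := hx t ht1 htT
    have hgradsm : StronglyMeasurable[ℱ t] fun ω => gradient f (x t ω) :=
      (hgradmeas.comp hxsm.measurable).stronglyMeasurable
    have hgt := hgL2 t ht1 htT
    have het := heL2 t ht1 (htT.trans (Nat.le_succ T))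
    have hgradL2 : MemLp (fun ω => gradient f (x t ω)) 2 P :=
      MemLp.ae_eq (hcond t ht1 htT) (aux_memℒp_condexp hm' hgt)
    set Z : Ω → EuclideanSpace ℝ (Fin d) := fun ω => g t ω - gradient f (x t ω) with hZdef
    set Y : Ω → EuclideanSpace ℝ (Fin d) := fun ω => e t ω + η • gradient f (x t ω) with hYdef
    have hZ : MemLp Z 2 P := hgt.sub hgradL2
    have hY : MemLp Y 2 P := het.add (hgradL2.const_smul η)
    have hYm : AEStronglyMeasurable[ℱ t] Y P :=
      ((he t ht1 htT).add (hgradsm.const_smul η)).aestronglyMeasurable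
    have hZc : P[Z|ℱ t] =ᵐ[P] 0 := by
      have h1 : P[Z|ℱ t] =ᵐ[P] P[g t|ℱ t] - P[(fun ω => gradient f (x t ω))|ℱ t] :=
        condExp_sub (hgt.integrable one_le_two) (hgradL2.integrable one_le_two) (ℱ t)
      have h2 : P[(fun ω => gradient f (x t ω))|ℱ t] = fun ω => gradient f (x t ω) :=
        condExp_of_stronglyMeasurable hm' hgradsm (hgradL2.integrable one_le_two)
      filter_upwards [h1, hcond t ht1 htT] with ω hω h2'
      rw [hω, Pi.sub_apply, h2', h2]
      simp
    have hcross : ∫ ω, (inner ℝ (Y ω) (Z ω) : ℝ) ∂P = 0 := aux_inner_zero hm' hY hZ hYm hZc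
    have hB : ∫ ω, ‖Y ω + η • Z ω‖^2 ∂P = ∫ ω, ‖Y ω‖^2 ∂P + η^2 * ∫ ω, ‖Z ω‖^2 ∂P :=
      aux_expand η hY hZ hcross
    have hfun : (fun ω => ‖η • g t ω + e t ω‖^2) = fun ω => ‖Y ω + η • Z ω‖^2 := by
      funext ω
      have : η • g t ω + e t ω = Y ω + η • Z ω := by
        simp only [hYdef, hZdef, smul_sub]
        abel
      rw [this]
    have hZeq : (∫ ω, ‖Z ω‖^2 ∂P) = ∫ ω, ‖g t ω - gradient f (x t ω)‖^2 ∂P := by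
      simp only [hZdef]
    have hwt := hwL2 t ht1 htT
    have hge : MemLp (fun ω => η • g t ω + e t ω) 2 P := (hgt.const_smul η).add het
    have hstep1 : (∫ ω, ‖e (t+1) ω‖^2 ∂P)
        ≤ γ * (∫ ω, ‖η • g t ω + e t ω‖^2 ∂P) + (2*η^2*K^2) * (∫ ω, ‖w t ω‖^2 ∂P) := by
      have hint1 := aux_sq_integrable (heL2 (t+1) (Nat.le_succ_of_le ht1) (Nat.succ_le_succ htT))
      have hIa : Integrable (fun ω => γ * ‖η • g t ω + e t ω‖^2) P :=
        (aux_sq_integrable hge).const_mul γ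
      have hIb : Integrable (fun ω => (2*η^2*K^2) * ‖w t ω‖^2) P :=
        (aux_sq_integrable hwt).const_mul _
      have hae : ∀ᵐ ω ∂P, ‖e (t+1) ω‖^2
          ≤ γ * ‖η • g t ω + e t ω‖^2 + (2*η^2*K^2) * ‖w t ω‖^2 := by
        filter_upwards [hrec t ht1 htT] with ω hω
        exact aux_sq_bound hγ0.le (norm_nonneg _) hω
      calc (∫ ω, ‖e (t+1) ω‖^2 ∂P)
          ≤ ∫ ω, (γ * ‖η • g t ω + e t ω‖^2 + (2*η^2*K^2) * ‖w t ω‖^2) ∂P :=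
            integral_mono_ae hint1 (hIa.add hIb) hae
        _ = γ * (∫ ω, ‖η • g t ω + e t ω‖^2 ∂P) + (2*η^2*K^2) * (∫ ω, ‖w t ω‖^2 ∂P) := by
            rw [integral_add hIa hIb, integral_const_mul, integral_const_mul]
    have hYb : (∫ ω, ‖Y ω‖^2 ∂P)
        ≤ (1+γ)/(2*γ) * (∫ ω, ‖e t ω‖^2 ∂P)
          + (1+γ)/(1-γ)*η^2 * (∫ ω, ‖gradient f (x t ω)‖^2 ∂P) := by
      have hint1 := aux_sq_integrable hY
      have hIa : Integrable (fun ω => (1+γ)/(2*γ) * ‖e t ω‖^2) P :=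
        (aux_sq_integrable het).const_mul _
      have hIb : Integrable (fun ω => (1+γ)/(1-γ)*η^2 * ‖gradient f (x t ω)‖^2) P :=
        (aux_sq_integrable hgradL2).const_mul _
      have hpt : ∀ ω, ‖Y ω‖^2
          ≤ (1+γ)/(2*γ) * ‖e t ω‖^2 + (1+γ)/(1-γ)*η^2 * ‖gradient f (x t ω)‖^2 := by
        intro ω
        have h1 : ‖Y ω‖ ≤ ‖e t ω‖ + η * ‖gradient f (x t ω)‖ := by
          have h := norm_add_le (e t ω) (η • gradient f (x t ω))
          simpa [hYdef, norm_smul, abs_of_pos hη] using h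
        have h2 := pow_le_pow_left₀ (norm_nonneg _) h1 2
        have h3 := aux_young hγ0 hγ1 (norm_nonneg (e t ω))
          (mul_nonneg hη.le (norm_nonneg (gradient f (x t ω))))
        calc ‖Y ω‖^2 ≤ (‖e t ω‖ + η * ‖gradient f (x t ω)‖)^2 := h2
          _ ≤ (1+γ)/(2*γ) * ‖e t ω‖^2 + (1+γ)/(1-γ) * (η * ‖gradient f (x t ω)‖)^2 := h3
          _ = (1+γ)/(2*γ) * ‖e t ω‖^2 + (1+γ)/(1-γ)*η^2 * ‖gradient f (x t ω)‖^2 := by ring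
      calc (∫ ω, ‖Y ω‖^2 ∂P)
          ≤ ∫ ω, ((1+γ)/(2*γ) * ‖e t ω‖^2 + (1+γ)/(1-γ)*η^2 * ‖gradient f (x t ω)‖^2) ∂P :=
            integral_mono hint1 (hIa.add hIb) hpt
        _ = (1+γ)/(2*γ) * (∫ ω, ‖e t ω‖^2 ∂P)
              + (1+γ)/(1-γ)*η^2 * (∫ ω, ‖gradient f (x t ω)‖^2 ∂P) := by
            rw [integral_add hIa hIb, integral_const_mul, integral_const_mul]
    have hN : (∫ ω, ‖Z ω‖^2 ∂P) ≤ G^2 := by rw [hZeq]; exact hvar t ht1 htT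
    have hW : (∫ ω, ‖w t ω‖^2 ∂P) ≤ σ^2 := hnoise t ht1 htT
    have hBeq : (∫ ω, ‖η • g t ω + e t ω‖^2 ∂P)
        = ∫ ω, ‖Y ω‖^2 ∂P + η^2 * ∫ ω, ‖Z ω‖^2 ∂P := by
      rw [hfun]; exact hB
    exact aux_key_arith hγ0 hγ1 hη.le hK hstep1 hBeq hYb hN hW
  -- summation
  have hApos : ∀ s : ℕ, (0:ℝ) ≤ ∫ ω, ‖e s ω‖^2 ∂P :=
    fun s => integral_nonneg fun ω => sq_nonneg _
  have hFpos : ∀ s : ℕ, (0:ℝ) ≤ ∫ ω, ‖gradient f (x s ω)‖^2 ∂P :=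
    fun s => integral_nonneg fun ω => sq_nonneg _
  have hA1 : (∫ ω, ‖e 1 ω‖^2 ∂P) = 0 := by rw [he1]; simp
  set S : ℝ := ∑ i ∈ Finset.range T, ∫ ω, ‖e (i+1) ω‖^2 ∂P with hSdef
  set SF : ℝ := ∑ i ∈ Finset.range T, ∫ ω, ‖gradient f (x (i+1) ω)‖^2 ∂P with hSFdef
  have hsum : ∑ i ∈ Finset.range T, (∫ ω, ‖e (i+1+1) ω‖^2 ∂P)
      ≤ (1+γ)/2 * S + γ*(1+γ)/(1-γ)*η^2 * SF + T*(γ*η^2*G^2 + 2*η^2*K^2*σ^2) := by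
    calc ∑ i ∈ Finset.range T, (∫ ω, ‖e (i+1+1) ω‖^2 ∂P)
        ≤ ∑ i ∈ Finset.range T, ((1+γ)/2 * (∫ ω, ‖e (i+1) ω‖^2 ∂P)
            + γ*(1+γ)/(1-γ)*η^2 * (∫ ω, ‖gradient f (x (i+1) ω)‖^2 ∂P)
            + (γ*η^2*G^2 + 2*η^2*K^2*σ^2)) :=
          Finset.sum_le_sum fun i hi =>
            key (i+1) (Nat.le_add_left 1 i) (by have := Finset.mem_range.mp hi; omega)
      _ = (1+γ)/2 * S + γ*(1+γ)/(1-γ)*η^2 * SF + T*(γ*η^2*G^2 + 2*η^2*K^2*σ^2) := by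
          rw [Finset.sum_add_distrib, Finset.sum_add_distrib, ← Finset.mul_sum, ← Finset.mul_sum,
            Finset.sum_const, Finset.card_range, nsmul_eq_mul, hSdef, hSFdef]
  have htele : ∑ i ∈ Finset.range T, (∫ ω, ‖e (i+1+1) ω‖^2 ∂P)
      = S + ((∫ ω, ‖e (T+1) ω‖^2 ∂P) - ∫ ω, ‖e 1 ω‖^2 ∂P) := by
    have h := Finset.sum_range_sub (fun i => ∫ ω, ‖e (i+1) ω‖^2 ∂P) T
    simp only [Nat.zero_add] at h
    rw [Finset.sum_sub_distrib] at h
    rw [hSdef]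
    linarith
  have hmain : S ≤ (1+γ)/2 * S + γ*(1+γ)/(1-γ)*η^2 * SF + T*(γ*η^2*G^2 + 2*η^2*K^2*σ^2) := by
    have h1 := hApos (T+1)
    linarith
  have hgoalA : ∑ t ∈ Finset.Icc 1 T, (∫ ω, ‖e t ω‖^2 ∂P) = S := by
    rw [← Finset.Ico_add_one_right_eq_Icc, Finset.sum_Ico_eq_sum_range, hSdef]
    simp only [Nat.add_sub_cancel, Nat.succ_sub_one]
    exact Finset.sum_congr rfl fun i _ => by rw [Nat.add_comm]
  have hgoalF : ∑ t ∈ Finset.Icc 1 T, (∫ ω, ‖gradient f (x t ω)‖^2 ∂P) = SF := by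
    rw [← Finset.Ico_add_one_right_eq_Icc, Finset.sum_Ico_eq_sum_range, hSFdef]
    simp only [Nat.add_sub_cancel, Nat.succ_sub_one]
    exact Finset.sum_congr rfl fun i _ => by rw [Nat.add_comm]
  rw [hgoalA, hgoalF]
  have hTpos : (0:ℝ) < T := by exact_mod_cast hT
  have hTne : (T:ℝ) ≠ 0 := ne_of_gt hTpos
  have hSFpos : (0:ℝ) ≤ SF := Finset.sum_nonneg fun i _ => hFpos _
  have hfinal : S ≤ (2 * η ^ 2 / (1 - γ) * (γ * (1 + γ) / (1 - γ) * G ^ 2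
        + 2 * K ^ 2 * σ ^ 2)) * T + (2 * η ^ 2 * γ * (1 + γ) / (1 - γ) ^ 2) * SF := by
    have h1 : (1-γ)/2 * S ≤ γ*(1+γ)/(1-γ)*η^2 * SF + T*(γ*η^2*G^2 + 2*η^2*K^2*σ^2) := by
      linarith
    have h2 := mul_le_mul_of_nonneg_left h1 (le_of_lt (by positivity : (0:ℝ) < 2/(1-γ)))
    have e1 : 2/(1-γ)*((1-γ)/2*S) = S := by field_simp <;> ring
    have e2 : 2/(1-γ)*(γ*(1+γ)/(1-γ)*η^2*SF + T*(γ*η^2*G^2 + 2*η^2*K^2*σ^2))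
        = 2*η^2*γ*(1+γ)/(1-γ)^2*SF + T*(2*γ*η^2*G^2/(1-γ) + 4*η^2*K^2*σ^2/(1-γ)) := by
      field_simp
      ring
    rw [e1, e2] at h2
    have e3 : (2 * η ^ 2 / (1 - γ) * (γ * (1 + γ) / (1 - γ) * G ^ 2 + 2 * K ^ 2 * σ ^ 2)) * T
        = T*(2*η^2*γ*(1+γ)*G^2/(1-γ)^2 + 4*η^2*K^2*σ^2/(1-γ)) := by
      field_simp
      ring
    rw [e3]
    have hG2 : 2*γ*η^2*G^2/(1-γ) ≤ 2*η^2*γ*(1+γ)*G^2/(1-γ)^2 := by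
      rw [div_le_div_iff₀ h1γ (by positivity)]
      nlinarith [mul_nonneg (mul_nonneg (mul_nonneg (sq_nonneg γ) (sq_nonneg η)) (sq_nonneg G)) h1γ.le]
    have h4 := mul_le_mul_of_nonneg_left hG2 hTpos.le
    linarith
  calc (1 / (T:ℝ)) * S
      ≤ (1 / (T:ℝ)) * ((2 * η ^ 2 / (1 - γ) * (γ * (1 + γ) / (1 - γ) * G ^ 2
          + 2 * K ^ 2 * σ ^ 2)) * T + (2 * η ^ 2 * γ * (1 + γ) / (1 - γ) ^ 2) * SF) :=
        mul_le_mul_of_nonneg_left hfinal (by positivity)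
    _ = 2 * η ^ 2 / (1 - γ) * (γ * (1 + γ) / (1 - γ) * G ^ 2 + 2 * K ^ 2 * σ ^ 2)
          + 2 * η ^ 2 * γ * (1 + γ) / (1 - γ) ^ 2 * ((1 / (T:ℝ)) * SF) := by
        field_simp
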